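/- For the level-one perfect crystal B(2Λ₁) ⊕ B(0) of type C_n^{(1)}, given explicitly as two-row-free one-row tableaux of length ≤ 2 in the alphabet {1 < ... < n < n̄ < ... < 1̄} together with ∅, with the stated crystal structure, no element lies on the nondominant part of at least two strings of length ≥ 2; all strings of length > 1 are exactly the explicitly listed k-strings of length 2 (for 1 ≤ k ≤ n) and the 0-string (1̄1̄) → ∅ → (11). -/

import Mathlib

open scoped Classical

/-- Iterate a partial map `m` times. -/
def pIter {B : Type*} (g : B → Option B) : ℕ → B → Option B
  | 0, b => some b
  | n+1, b => (g b).bind (pIter g n)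

/-- Elements of the level-one perfect crystal `B(2Λ₁) ⊕ B(0)` of type `C_n^{(1)}`:
`∅` (encoded `none`) together with one-row tableaux `(x,y)` in the alphabet
`{1 < ⋯ < n < n̄ < ⋯ < 1̄}` (encoded `Fin (2n)`, 0-based); the valid ones satisfy
`x ≤ y`. -/
abbrev EltC (n : ℕ) := Option (Fin (2*n) × Fin (2*n))

/-- Successor in the alphabet. -/
def fsucc (n : ℕ) (hn : 0 < n) (v : Fin (2*n)) : Fin (2*n) :=
  ⟨(v.val + 1) % (2*n), Nat.mod_lt _ (by omega)⟩

/-- `φ_c` of a single letter in the chain `1 → 2 → ⋯ → n → n̄ → ⋯ → 1̄` with edge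
colors `1,…,n-1,n,n-1,…,1`: the edge out of `v` has color `min (v+1) (2n-1-v)`. -/
def phiLetter (n : ℕ) (c : ℕ) (v : Fin (2*n)) : ℕ :=
  if v.val + 1 < 2*n ∧ c = min (v.val + 1) (2*n - 1 - v.val) then 1 else 0

/-- `ε_c` of a single letter: the edge into `v` has color `min v (2n - v)`. -/
def epsLetter (n : ℕ) (c : ℕ) (v : Fin (2*n)) : ℕ :=
  if 0 < v.val ∧ c = min v.val (2*n - v.val) then 1 else 0

/-- The lowering operators on `B(2Λ₁) ⊕ B(0)` for `C_n^{(1)}`: for colors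
`1 ≤ c ≤ n` via the tensor product rule on `(x, y) = x ⊗ y`, and
`f₀ : (i,1̄) ↦ (1,i)` for `i ≠ 1,1̄`, `(1̄,1̄) ↦ ∅`, `∅ ↦ (1,1)`. -/
def fC (n : ℕ) (hn : 0 < n) (c : ℕ) : EltC n → Option (EltC n)
  | none => if c = 0 then some (some (⟨0, by omega⟩, ⟨0, by omega⟩)) else none
  | some (x, y) =>
    if c = 0 then
      if y.val = 2*n - 1 then
        if x.val = 2*n - 1 then some none
        else if x.val ≠ 0 then some (some (⟨0, by omega⟩, x)) else none
      else none
    else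
      if epsLetter n c x < phiLetter n c y then some (some (x, fsucc n hn y))
      else if phiLetter n c x = 1 then some (some (fsucc n hn x, y))
      else none

/-- `φ_c(b)`: maximal number of times `f_c` applies. -/
noncomputable def phiC (n : ℕ) (hn : 0 < n) (c : ℕ) (b : EltC n) : ℕ :=
  sSup {m | (pIter (fC n hn c) m b).isSome}

/-- `ε_c(b)`: maximal number of times `e_c = f_c⁻¹` applies, i.e. the maximal `m`
such that `b` is the image of `f_c^m`. -/
noncomputable def epsC (n : ℕ) (hn : 0 < n) (c : ℕ) (b : EltC n) : ℕ :=
  sSup {m | ∃ a, pIter (fC n hn c) m a = some b}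

lemma epsLetter_eq (n c : ℕ) (hc : 1 ≤ c) (hcn : c ≤ n) (x : Fin (2*n)) :
    epsLetter n c x = if x.val = c ∨ x.val = 2*n - c then 1 else 0 := by
  have hx := x.isLt
  unfold epsLetter
  split_ifs with h1 h2 h2 <;> omega

lemma phiLetter_eq (n c : ℕ) (hc : 1 ≤ c) (hcn : c ≤ n) (x : Fin (2*n)) :
    phiLetter n c x = if x.val = c - 1 ∨ x.val = 2*n - 1 - c then 1 else 0 := by
  have hx := x.isLt
  unfold phiLetter
  split_ifs with h1 h2 h2 <;> omega

lemma fsucc_val (n : ℕ) (hn : 0 < n) (v : Fin (2*n)) (h : v.val + 1 < 2*n) :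
    (fsucc n hn v).val = v.val + 1 := by
  simp [fsucc, Nat.mod_eq_of_lt h]
lemma fC_pos (n : ℕ) (hn : 0 < n) (c : ℕ) (hc : 1 ≤ c) (hcn : c ≤ n) (x y : Fin (2*n)) :
    fC n hn c (some (x, y)) =
      if (¬(x.val = c ∨ x.val = 2*n - c)) ∧ (y.val = c - 1 ∨ y.val = 2*n - 1 - c) then
        some (some (x, fsucc n hn y))
      else if x.val = c - 1 ∨ x.val = 2*n - 1 - c then some (some (fsucc n hn x, y))
      else none := by
  have hc0 : c ≠ 0 := by omega
  have hx := x.isLt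
  have hy := y.isLt
  show (if c = 0 then _ else _) = _
  rw [if_neg hc0, epsLetter_eq n c hc hcn x, phiLetter_eq n c hc hcn y,
      phiLetter_eq n c hc hcn x]
  split_ifs
  all_goals (first | rfl | (exfalso; first | assumption | omega))

variable {n c : ℕ}

lemma fC_none_pos (hn : 0 < n) (hc : c ≠ 0) : fC n hn c none = none := by
  simp [fC, hc]

lemma fC_pos_image (hn : 0 < n) (hc : 1 ≤ c) (hcn : c ≤ n) {a b : EltC n}
    (h : fC n hn c a = some b) :
    ∃ u v : Fin (2*n), b = some (u, v) ∧
      (u.val = c ∨ u.val = 2*n - c ∨ v.val = c ∨ v.val = 2*n - c) := by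
  cases a with
  | none => rw [fC_none_pos hn (by omega)] at h; exact absurd h (by simp)
  | some p =>
    obtain ⟨x, y⟩ := p
    rw [fC_pos n hn c hc hcn x y] at h
    split_ifs at h with h1 h2
    · injection h with h; subst h
      have hy := fsucc_val n hn y (by omega)
      exact ⟨x, fsucc n hn y, rfl, by omega⟩
    · injection h with h; subst h
      have hx := fsucc_val n hn x (by omega)
      exact ⟨fsucc n hn x, y, rfl, by omega⟩

lemma chain2_pos (hn : 0 < n) (hc : 1 ≤ c) (hcn : c ≤ n) {a b₁ b₂ : EltC n}
    (h1 : fC n hn c a = some b₁) (h2 : fC n hn c b₁ = some b₂) :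
    ∃ x y : Fin (2*n), a = some (x, y) ∧
      (x.val = c - 1 ∨ x.val = 2*n - 1 - c) ∧ (y.val = c - 1 ∨ y.val = 2*n - 1 - c) ∧
      b₁ = some (x, fsucc n hn y) ∧ b₂ = some (fsucc n hn x, fsucc n hn y) := by
  cases a with
  | none => rw [fC_none_pos hn (by omega)] at h1; exact absurd h1 (by simp)
  | some p =>
    obtain ⟨x, y⟩ := p
    have hx := x.isLt; have hy := y.isLt
    rw [fC_pos n hn c hc hcn x y] at h1
    split_ifs at h1 with hA hB
    · injection h1 with h1; subst h1
      have hyv := fsucc_val n hn y (by omega)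
      rw [fC_pos n hn c hc hcn x (fsucc n hn y)] at h2
      split_ifs at h2 with hA2 hB2
      · exfalso; omega
      · injection h2 with h2; subst h2
        exact ⟨x, y, rfl, hB2, hA.2, rfl, rfl⟩
    · injection h1 with h1; subst h1
      have hxv := fsucc_val n hn x (by omega)
      rw [fC_pos n hn c hc hcn (fsucc n hn x) y] at h2
      split_ifs at h2 with hA2 hB2
      · exfalso; omega
      · exfalso; omega
section basic
variable {B : Type*} (g : B → Option B)

lemma pIter_one (a : B) : pIter g 1 a = g a := by
  cases h : g a <;> simp [pIter, h]

lemma pIter_add (m k : ℕ) (b : B) :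
    pIter g (m + k) b = (pIter g m b).bind (pIter g k) := by
  induction m generalizing b with
  | zero => simp [pIter]
  | succ m ih =>
    rw [Nat.succ_add]
    show (g b).bind (pIter g (m + k)) = ((g b).bind (pIter g m)).bind (pIter g k)
    cases h : g b with
    | none => simp
    | some b' => simp [ih]

lemma pIter_two (a : B) : pIter g 2 a = (g a).bind g := by
  show (g a).bind (pIter g 1) = _
  cases h : g a <;> simp [pIter_one]

end basic

lemma fC_zero_none (hn : 0 < n) :
    fC n hn 0 none = some (some (⟨0, by omega⟩, ⟨0, by omega⟩)) := by
  simp [fC]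

lemma fC_zero_some (hn : 0 < n) (x y : Fin (2*n)) :
    fC n hn 0 (some (x, y)) =
      if y.val = 2*n - 1 then
        if x.val = 2*n - 1 then some none
        else if x.val ≠ 0 then some (some (⟨0, by omega⟩, x)) else none
      else none := by
  simp [fC]

lemma fC_zero_image (hn : 0 < n) {a b : EltC n} (h : fC n hn 0 a = some b) :
    b = none ∨ ∃ u v : Fin (2*n), b = some (u, v) ∧ u.val = 0 := by
  cases a with
  | none =>
    rw [fC_zero_none hn] at h
    injection h with h
    exact Or.inr ⟨_, _, h.symm, rfl⟩
  | some p =>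
    obtain ⟨x, y⟩ := p
    rw [fC_zero_some hn x y] at h
    split_ifs at h with h1 h2 h3
    · injection h with h; exact Or.inl h.symm
    · injection h with h; exact Or.inr ⟨_, _, h.symm, rfl⟩

lemma chain2_zero (hn : 2 ≤ 2*n) {a b₁ b₂ : EltC n} (hn' : 0 < n)
    (h1 : fC n hn' 0 a = some b₁) (h2 : fC n hn' 0 b₁ = some b₂) :
    a = some (⟨2*n - 1, by omega⟩, ⟨2*n - 1, by omega⟩) ∧ b₁ = none ∧
      b₂ = some (⟨0, by omega⟩, ⟨0, by omega⟩) := by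
  cases a with
  | none =>
    rw [fC_zero_none hn'] at h1
    injection h1 with h1
    rw [← h1, fC_zero_some hn'] at h2
    rw [if_neg (by simp; omega)] at h2
    exact absurd h2 (by simp)
  | some p =>
    obtain ⟨x, y⟩ := p
    have hx := x.isLt; have hy := y.isLt
    rw [fC_zero_some hn' x y] at h1
    split_ifs at h1 with hy1 hx1 hx0
    · injection h1 with h1
      rw [← h1, fC_zero_none hn'] at h2
      injection h2 with h2
      refine ⟨?_, h1.symm, h2.symm⟩
      have hxy : (x, y) = ((⟨2*n - 1, by omega⟩ : Fin (2*n)), (⟨2*n - 1, by omega⟩ : Fin (2*n))) := by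
        simp only [Prod.ext_iff, Fin.ext_iff]
        omega
      exact congrArg some hxy
    · injection h1 with h1
      rw [← h1, fC_zero_some hn'] at h2
      rw [if_neg (show ¬ ((x : Fin (2*n)).val = 2*n-1) by omega)] at h2
      exact absurd h2 (by simp)
lemma pIter_three_eq_none {n c : ℕ} (hn : 0 < n) (hcn : c ≤ n) (a : EltC n) :
    pIter (fC n hn c) 3 a = none := by
  rw [(by norm_num : (3:ℕ) = 1+2), pIter_add, pIter_one]
  cases h1 : fC n hn c a with
  | none => rfl
  | some b₁ =>
    show pIter (fC n hn c) 2 b₁ = none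
    rw [pIter_two]
    cases h2 : fC n hn c b₁ with
    | none => rfl
    | some b₂ =>
      show fC n hn c b₂ = none
      rcases Nat.eq_zero_or_pos c with hc | hc
      · subst hc
        obtain ⟨ha, hb1, hb2⟩ := chain2_zero (by omega) hn h1 h2
        rw [hb2, fC_zero_some hn]
        rw [if_neg (by simp; omega)]
      · obtain ⟨x, y, _, hxv, hyv, hb1, hb2⟩ := chain2_pos hn hc hcn h1 h2
        have hx := x.isLt; have hy := y.isLt
        have hx1 := fsucc_val n hn x (by omega)
        have hy1 := fsucc_val n hn y (by omega)
        rw [hb2, fC_pos n hn c hc hcn]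
        rw [if_neg (by omega), if_neg (by omega)]

lemma pIter_none_of_ge {n c : ℕ} (hn : 0 < n) (hcn : c ≤ n) (a : EltC n) {m : ℕ}
    (hm : 3 ≤ m) : pIter (fC n hn c) m a = none := by
  rw [(by omega : m = 3 + (m - 3)), pIter_add, pIter_three_eq_none hn hcn]
  rfl
lemma two_le_iff {n c : ℕ} (hn : 0 < n) (hcn : c ≤ n) (b : EltC n) :
    2 ≤ phiC n hn c b + epsC n hn c b ↔
      ((∃ b₁ b₂, fC n hn c b = some b₁ ∧ fC n hn c b₁ = some b₂) ∨
       (∃ a b₁, fC n hn c a = some b ∧ fC n hn c b = some b₁) ∨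
       (∃ a₁ a₂, fC n hn c a₁ = some a₂ ∧ fC n hn c a₂ = some b)) := by
  set g := fC n hn c with hg
  set Sφ : Set ℕ := {m | (pIter g m b).isSome} with hSφ
  set Sε : Set ℕ := {m | ∃ a, pIter g m a = some b} with hSε
  have h0φ : 0 ∈ Sφ := by simp [hSφ, pIter]
  have h0ε : 0 ∈ Sε := ⟨b, rfl⟩
  have hbφ : ∀ m ∈ Sφ, m ≤ 2 := by
    intro m hm
    by_contra hm3
    rw [hSφ, Set.mem_setOf_eq, pIter_none_of_ge hn hcn b (by omega)] at hm
    simp at hm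
  have hbε : ∀ m ∈ Sε, m ≤ 2 := by
    intro m hm
    by_contra hm3
    obtain ⟨a, ha⟩ := hm
    rw [pIter_none_of_ge hn hcn a (by omega)] at ha
    exact absurd ha (by simp)
  have hΦmem : phiC n hn c b ∈ Sφ := Nat.sSup_mem ⟨0, h0φ⟩ ⟨2, hbφ⟩
  have hΕmem : epsC n hn c b ∈ Sε := Nat.sSup_mem ⟨0, h0ε⟩ ⟨2, hbε⟩
  have hΦle : phiC n hn c b ≤ 2 := hbφ _ hΦmem
  have hΕle : epsC n hn c b ≤ 2 := hbε _ hΕmem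
  have hφle : ∀ m ∈ Sφ, m ≤ phiC n hn c b := fun m hm => le_csSup ⟨2, hbφ⟩ hm
  have hεle : ∀ m ∈ Sε, m ≤ epsC n hn c b := fun m hm => le_csSup ⟨2, hbε⟩ hm
  have h2φ : 2 ∈ Sφ ↔ ∃ b₁ b₂, g b = some b₁ ∧ g b₁ = some b₂ := by
    rw [hSφ, Set.mem_setOf_eq, pIter_two]
    constructor
    · intro h
      cases h1 : g b with
      | none => rw [h1] at h; exact absurd h (by simp)
      | some b₁ =>
        rw [h1] at h
        cases h2 : g b₁ with
        | none => rw [show (some b₁).bind g = g b₁ from rfl, h2] at h; exact absurd h (by simp)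
        | some b₂ => exact ⟨b₁, b₂, rfl, h2⟩
    · rintro ⟨b₁, b₂, h1, h2⟩
      rw [h1]
      show (g b₁).isSome
      rw [h2]; rfl
  have h1φ : 1 ∈ Sφ ↔ ∃ b₁, g b = some b₁ := by
    rw [hSφ, Set.mem_setOf_eq, pIter_one]
    cases h1 : g b <;> simp
  have h1ε : 1 ∈ Sε ↔ ∃ a, g a = some b := by
    constructor
    · rintro ⟨a, ha⟩; rw [pIter_one] at ha; exact ⟨a, ha⟩
    · rintro ⟨a, ha⟩; exact ⟨a, by rw [pIter_one]; exact ha⟩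
  have h2ε : 2 ∈ Sε ↔ ∃ a₁ a₂, g a₁ = some a₂ ∧ g a₂ = some b := by
    constructor
    · rintro ⟨a, ha⟩
      rw [pIter_two] at ha
      obtain ⟨a₂, h1, h2⟩ := Option.bind_eq_some_iff.mp ha
      exact ⟨a, a₂, h1, h2⟩
    · rintro ⟨a₁, a₂, h1, h2⟩
      exact ⟨a₁, by rw [pIter_two, h1]; exact h2⟩
  have hdε : 2 ∈ Sε → 1 ∈ Sε := by
    intro h
    obtain ⟨a₁, a₂, h1, h2⟩ := h2ε.mp h
    exact h1ε.mpr ⟨a₂, h2⟩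
  constructor
  · intro h
    rcases Nat.lt_or_ge (phiC n hn c b) 2 with hφ | hφ
    · rcases Nat.lt_or_ge (phiC n hn c b) 1 with hφ0 | hφ1
      · right; right
        have : epsC n hn c b = 2 := by omega
        exact h2ε.mp (this ▸ hΕmem)
      · right; left
        have h1 : 1 ∈ Sφ := by
          have : phiC n hn c b = 1 := by omega
          exact this ▸ hΦmem
        have hε1 : 1 ∈ Sε := by
          have hε : 1 ≤ epsC n hn c b := by omega
          rcases Nat.lt_or_ge (epsC n hn c b) 2 with h' | h'
          · have : epsC n hn c b = 1 := by omega
            exact this ▸ hΕmem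
          · have : epsC n hn c b = 2 := by omega
            exact hdε (this ▸ hΕmem)
        obtain ⟨a, ha⟩ := h1ε.mp hε1
        obtain ⟨b₁, hb₁⟩ := h1φ.mp h1
        exact ⟨a, b₁, ha, hb₁⟩
    · left
      have : phiC n hn c b = 2 := by omega
      exact h2φ.mp (this ▸ hΦmem)
  · rintro (h | h | h)
    · have := hφle 2 (h2φ.mpr h); omega
    · obtain ⟨a, b₁, h1, h2⟩ := h
      have e1 := hεle 1 (h1ε.mpr ⟨a, h1⟩)
      have e2 := hφle 1 (h1φ.mpr ⟨b₁, h2⟩)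
      omega
    · have := hεle 2 (h2ε.mpr h); omega
lemma chain_exists {n c : ℕ} (hn : 0 < n) (hc : 1 ≤ c) (hcn : c ≤ n) (u v : Fin (2*n))
    (hu : u.val = c - 1 ∨ u.val = 2*n - 1 - c) (hv : v.val = c - 1 ∨ v.val = 2*n - 1 - c) :
    fC n hn c (some (u, v)) = some (some (u, fsucc n hn v)) ∧
      fC n hn c (some (u, fsucc n hn v)) = some (some (fsucc n hn u, fsucc n hn v)) := by
  have hvv := fsucc_val n hn v (by omega)
  constructor
  · rw [fC_pos n hn c hc hcn, if_pos ⟨by omega, hv⟩]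
  · rw [fC_pos n hn c hc hcn, if_neg (by omega), if_pos hu]

lemma class_pos {n c : ℕ} (hn : 0 < n) (hc : 1 ≤ c) (hcn : c ≤ n) (b : EltC n)
    (hb : b = none ∨ ∃ x y : Fin (2*n), x ≤ y ∧ b = some (x, y))
    (hp : c - 1 < 2*n) (hq : 2*n - 1 - c < 2*n) :
    2 ≤ phiC n hn c b + epsC n hn c b ↔
      (b = some (⟨c - 1, hp⟩, ⟨c - 1, hp⟩)
      ∨ b = some (⟨c - 1, hp⟩, fsucc n hn ⟨c - 1, hp⟩)
      ∨ b = some (fsucc n hn ⟨c - 1, hp⟩, fsucc n hn ⟨c - 1, hp⟩)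
      ∨ b = some (⟨c - 1, hp⟩, ⟨2*n - 1 - c, hq⟩)
      ∨ b = some (⟨c - 1, hp⟩, fsucc n hn ⟨2*n - 1 - c, hq⟩)
      ∨ b = some (fsucc n hn ⟨c - 1, hp⟩, fsucc n hn ⟨2*n - 1 - c, hq⟩)
      ∨ b = some (⟨2*n - 1 - c, hq⟩, ⟨2*n - 1 - c, hq⟩)
      ∨ b = some (⟨2*n - 1 - c, hq⟩, fsucc n hn ⟨2*n - 1 - c, hq⟩)
      ∨ b = some (fsucc n hn ⟨2*n - 1 - c, hq⟩, fsucc n hn ⟨2*n - 1 - c, hq⟩)) := by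
  rw [two_le_iff hn hcn]
  constructor
  · rintro (⟨b₁, b₂, h1, h2⟩ | ⟨a, b₁, h1, h2⟩ | ⟨a₁, a₂, h1, h2⟩)
    · -- b is the bottom of a 2-string
      obtain ⟨x, y, hbe, hxv, hyv, hb1, hb2⟩ := chain2_pos hn hc hcn h1 h2
      have hval : x.val ≤ y.val := by
        rcases hb with hb | ⟨x', y', hxy, hb⟩
        · rw [hb] at hbe; exact absurd hbe (by simp)
        · rw [hb] at hbe; injection hbe with hbe
          obtain ⟨e1, e2⟩ := Prod.mk.injEq .. ▸ hbe
          rw [← e1, ← e2]; exact hxy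
      by_cases hxc : x.val = c - 1 <;> by_cases hyc : y.val = c - 1
      · have hx' : x = ⟨c - 1, hp⟩ := Fin.ext (by simp only [Fin.val_mk]; omega)
        have hy' : y = ⟨c - 1, hp⟩ := Fin.ext (by simp only [Fin.val_mk]; omega)
        exact Or.inl (by rw [hbe, hx', hy'])
      · have hx' : x = ⟨c - 1, hp⟩ := Fin.ext (by simp only [Fin.val_mk]; omega)
        have hy' : y = ⟨2*n - 1 - c, hq⟩ := Fin.ext (by simp only [Fin.val_mk]; omega)
        exact Or.inr (Or.inr (Or.inr (Or.inl (by rw [hbe, hx', hy']))))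
      · exfalso; omega
      · have hx' : x = ⟨2*n - 1 - c, hq⟩ := Fin.ext (by simp only [Fin.val_mk]; omega)
        have hy' : y = ⟨2*n - 1 - c, hq⟩ := Fin.ext (by simp only [Fin.val_mk]; omega)
        exact Or.inr (Or.inr (Or.inr (Or.inr (Or.inr (Or.inr (Or.inl
          (by rw [hbe, hx', hy'])))))))
    · -- b is the middle of a 2-string
      obtain ⟨x, y, hae, hxv, hyv, hb1, hb2⟩ := chain2_pos hn hc hcn h1 h2
      have hyy := fsucc_val n hn y (by omega)
      have hval : x.val ≤ y.val + 1 := by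
        rcases hb with hb | ⟨x', y', hxy, hb⟩
        · rw [hb] at hb1; exact absurd hb1.symm (by simp)
        · rw [hb] at hb1; injection hb1 with hb1
          obtain ⟨e1, e2⟩ := Prod.mk.injEq .. ▸ hb1.symm
          have := Fin.le_def.mp hxy
          omega
      by_cases hxc : x.val = c - 1 <;> by_cases hyc : y.val = c - 1
      · have hx' : x = ⟨c - 1, hp⟩ := Fin.ext (by simp only [Fin.val_mk]; omega)
        have hy' : y = ⟨c - 1, hp⟩ := Fin.ext (by simp only [Fin.val_mk]; omega)
        exact Or.inr (Or.inl (by rw [hb1, hx', hy']))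
      · have hx' : x = ⟨c - 1, hp⟩ := Fin.ext (by simp only [Fin.val_mk]; omega)
        have hy' : y = ⟨2*n - 1 - c, hq⟩ := Fin.ext (by simp only [Fin.val_mk]; omega)
        exact Or.inr (Or.inr (Or.inr (Or.inr (Or.inl (by rw [hb1, hx', hy'])))))
      · exfalso; omega
      · have hx' : x = ⟨2*n - 1 - c, hq⟩ := Fin.ext (by simp only [Fin.val_mk]; omega)
        have hy' : y = ⟨2*n - 1 - c, hq⟩ := Fin.ext (by simp only [Fin.val_mk]; omega)
        exact Or.inr (Or.inr (Or.inr (Or.inr (Or.inr (Or.inr (Or.inr (Or.inl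
          (by rw [hb1, hx', hy']))))))))
    · -- b is the top of a 2-string
      obtain ⟨x, y, hae, hxv, hyv, hb1, hb2⟩ := chain2_pos hn hc hcn h1 h2
      have hyy := fsucc_val n hn y (by omega)
      have hxx := fsucc_val n hn x (by omega)
      have hval : x.val + 1 ≤ y.val + 1 := by
        rcases hb with hb | ⟨x', y', hxy, hb⟩
        · rw [hb] at hb2; exact absurd hb2.symm (by simp)
        · rw [hb] at hb2; injection hb2 with hb2
          obtain ⟨e1, e2⟩ := Prod.mk.injEq .. ▸ hb2.symm
          have := Fin.le_def.mp hxy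
          omega
      by_cases hxc : x.val = c - 1 <;> by_cases hyc : y.val = c - 1
      · have hx' : x = ⟨c - 1, hp⟩ := Fin.ext (by simp only [Fin.val_mk]; omega)
        have hy' : y = ⟨c - 1, hp⟩ := Fin.ext (by simp only [Fin.val_mk]; omega)
        exact Or.inr (Or.inr (Or.inl (by rw [hb2, hx', hy'])))
      · have hx' : x = ⟨c - 1, hp⟩ := Fin.ext (by simp only [Fin.val_mk]; omega)
        have hy' : y = ⟨2*n - 1 - c, hq⟩ := Fin.ext (by simp only [Fin.val_mk]; omega)
        exact Or.inr (Or.inr (Or.inr (Or.inr (Or.inr (Or.inl (by rw [hb2, hx', hy']))))))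
      · exfalso; omega
      · have hx' : x = ⟨2*n - 1 - c, hq⟩ := Fin.ext (by simp only [Fin.val_mk]; omega)
        have hy' : y = ⟨2*n - 1 - c, hq⟩ := Fin.ext (by simp only [Fin.val_mk]; omega)
        exact Or.inr (Or.inr (Or.inr (Or.inr (Or.inr (Or.inr (Or.inr (Or.inr
          (by rw [hb2, hx', hy']))))))))
  · have hP : (⟨c - 1, hp⟩ : Fin (2*n)).val = c - 1 ∨ (⟨c - 1, hp⟩ : Fin (2*n)).val = 2*n - 1 - c := Or.inl rfl
    have hQ : (⟨2*n - 1 - c, hq⟩ : Fin (2*n)).val = c - 1 ∨ (⟨2*n - 1 - c, hq⟩ : Fin (2*n)).val = 2*n - 1 - c := Or.inr rfl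
    rintro (hb' | hb' | hb' | hb' | hb' | hb' | hb' | hb' | hb')
    · exact Or.inl ⟨_, _, (hb' ▸ (chain_exists hn hc hcn _ _ hP hP).1),
        (chain_exists hn hc hcn _ _ hP hP).2⟩
    · exact Or.inr (Or.inl ⟨_, _, (hb' ▸ (chain_exists hn hc hcn _ _ hP hP).1 : _),
        hb' ▸ (chain_exists hn hc hcn _ _ hP hP).2⟩)
    · exact Or.inr (Or.inr ⟨_, _, (chain_exists hn hc hcn _ _ hP hP).1,
        hb' ▸ (chain_exists hn hc hcn _ _ hP hP).2⟩)
    · exact Or.inl ⟨_, _, (hb' ▸ (chain_exists hn hc hcn _ _ hP hQ).1),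
        (chain_exists hn hc hcn _ _ hP hQ).2⟩
    · exact Or.inr (Or.inl ⟨_, _, (hb' ▸ (chain_exists hn hc hcn _ _ hP hQ).1 : _),
        hb' ▸ (chain_exists hn hc hcn _ _ hP hQ).2⟩)
    · exact Or.inr (Or.inr ⟨_, _, (chain_exists hn hc hcn _ _ hP hQ).1,
        hb' ▸ (chain_exists hn hc hcn _ _ hP hQ).2⟩)
    · exact Or.inl ⟨_, _, (hb' ▸ (chain_exists hn hc hcn _ _ hQ hQ).1),
        (chain_exists hn hc hcn _ _ hQ hQ).2⟩
    · exact Or.inr (Or.inl ⟨_, _, (hb' ▸ (chain_exists hn hc hcn _ _ hQ hQ).1 : _),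
        hb' ▸ (chain_exists hn hc hcn _ _ hQ hQ).2⟩)
    · exact Or.inr (Or.inr ⟨_, _, (chain_exists hn hc hcn _ _ hQ hQ).1,
        hb' ▸ (chain_exists hn hc hcn _ _ hQ hQ).2⟩)
lemma class_zero {n : ℕ} (hn : 0 < n) (b : EltC n) :
    2 ≤ phiC n hn 0 b + epsC n hn 0 b ↔
      (b = none ∨ b = some (⟨0, by omega⟩, ⟨0, by omega⟩)
        ∨ b = some (⟨2*n - 1, by omega⟩, ⟨2*n - 1, by omega⟩)) := by
  have hgT : fC n hn 0 (some (⟨2*n - 1, by omega⟩, ⟨2*n - 1, by omega⟩)) = some none := by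
    rw [fC_zero_some hn, if_pos rfl, if_pos rfl]
  have hgN : fC n hn 0 none = some (some (⟨0, by omega⟩, ⟨0, by omega⟩)) := fC_zero_none hn
  rw [two_le_iff hn (by omega)]
  constructor
  · rintro (⟨b₁, b₂, h1, h2⟩ | ⟨a, b₁, h1, h2⟩ | ⟨a₁, a₂, h1, h2⟩)
    · exact Or.inr (Or.inr (chain2_zero (by omega) hn h1 h2).1)
    · exact Or.inl (chain2_zero (by omega) hn h1 h2).2.1
    · exact Or.inr (Or.inl (chain2_zero (by omega) hn h1 h2).2.2)
  · rintro (hb | hb | hb)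
    · exact Or.inr (Or.inl ⟨_, _, hb ▸ hgT, hb ▸ hgN⟩)
    · exact Or.inr (Or.inr ⟨_, _, hgT, hb ▸ hgN⟩)
    · exact Or.inl ⟨_, _, hb ▸ hgT, hgN⟩
lemma key_fact {n : ℕ} (hn : 0 < n) (c : ℕ) (hc : c ≤ n) (b : EltC n)
    (hb : b = none ∨ ∃ x y : Fin (2*n), x ≤ y ∧ b = some (x, y))
    (ha : ∃ a, fC n hn c a = some b) (h2 : 2 ≤ phiC n hn c b + epsC n hn c b) :
    (c = 0 ∧ (b = none ∨ b = some (⟨0, by omega⟩, ⟨0, by omega⟩)))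
    ∨ (1 ≤ c ∧ ∃ u v : Fin (2*n), b = some (u, v) ∧ (v.val = c ∨ v.val = 2*n - c)) := by
  obtain ⟨a, ha⟩ := ha
  rcases Nat.eq_zero_or_pos c with hc0 | hc1
  · subst hc0
    left
    refine ⟨rfl, ?_⟩
    rcases (class_zero hn b).mp h2 with h | h | h
    · exact Or.inl h
    · exact Or.inr h
    · exfalso
      rcases fC_zero_image hn ha with h' | ⟨u, v, h', hu⟩
      · rw [h] at h'; exact absurd h' (by simp)
      · rw [h] at h'
        injection h' with h''
        have := congrArg (fun p => (Prod.fst p).val) h''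
        simp only [Fin.val_mk] at this
        omega
  · right
    refine ⟨hc1, ?_⟩
    have hp : c - 1 < 2*n := by omega
    have hq : 2*n - 1 - c < 2*n := by omega
    have h9 := (class_pos hn hc1 hc b hb hp hq).mp h2
    obtain ⟨u, v, hbe, huv⟩ := fC_pos_image hn hc1 hc ha
    refine ⟨u, v, hbe, ?_⟩
    have hu := u.isLt; have hv := v.isLt
    have E1 : fsucc n hn ⟨c - 1, hp⟩ = (⟨c, by omega⟩ : Fin (2*n)) :=
      Fin.ext (by rw [fsucc_val n hn _ (by simp only [Fin.val_mk]; omega)]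
                  simp only [Fin.val_mk]; omega)
    have E2 : fsucc n hn ⟨2*n - 1 - c, hq⟩ = (⟨2*n - c, by omega⟩ : Fin (2*n)) :=
      Fin.ext (by rw [fsucc_val n hn _ (by simp only [Fin.val_mk]; omega)]
                  simp only [Fin.val_mk]; omega)
    rw [hbe, E1, E2] at h9
    simp only [Option.some.injEq, Prod.mk.injEq, Fin.ext_iff, Fin.val_mk] at h9
    omega
/-- in the level-one perfect crystal `B(2Λ₁) ⊕ B(0)` of type
`C_n^{(1)}`, no element lies on the nondominant part of at least two strings of
length `≥ 2`, and the strings of length `> 1` are exactly the listed `k`-strings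
of length two (for `1 ≤ k ≤ n`, on the elements `(k,k),(k,k+1),(k+1,k+1)`,
`(k,\overline{k+1}),(k,k̄),(k+1,k̄)`, `(\overline{k+1},\overline{k+1}),
(\overline{k+1},k̄),(k̄,k̄)`) and the `0`-string `(1̄,1̄) → ∅ → (1,1)`. -/
theorem typeC_level_one_crystal_strings (n : ℕ) (hn : 2 ≤ n) :
    (∀ b : EltC n,
      (b = none ∨ ∃ x y : Fin (2*n), x ≤ y ∧ b = some (x, y)) →
      (Finset.univ.filter (fun c : Fin (n+1) =>
          (∃ a, fC n (by omega) c.val a = some b) ∧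
          2 ≤ phiC n (by omega) c.val b + epsC n (by omega) c.val b)).card ≤ 1)
    ∧ (∀ (c : Fin (n+1)) (b : EltC n),
        (b = none ∨ ∃ x y : Fin (2*n), x ≤ y ∧ b = some (x, y)) →
        (2 ≤ phiC n (by omega) c.val b + epsC n (by omega) c.val b ↔
          (c.val = 0 ∧
            (b = none
              ∨ b = some (⟨0, by omega⟩, ⟨0, by omega⟩)
              ∨ b = some (⟨2*n - 1, by omega⟩, ⟨2*n - 1, by omega⟩)))
          ∨ (0 < c.val ∧
              ∃ (hp : c.val - 1 < 2*n) (hq : 2*n - 1 - c.val < 2*n),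
                (b = some (⟨c.val - 1, hp⟩, ⟨c.val - 1, hp⟩)
                ∨ b = some (⟨c.val - 1, hp⟩, fsucc n (by omega) ⟨c.val - 1, hp⟩)
                ∨ b = some (fsucc n (by omega) ⟨c.val - 1, hp⟩,
                    fsucc n (by omega) ⟨c.val - 1, hp⟩)
                ∨ b = some (⟨c.val - 1, hp⟩, ⟨2*n - 1 - c.val, hq⟩)
                ∨ b = some (⟨c.val - 1, hp⟩, fsucc n (by omega) ⟨2*n - 1 - c.val, hq⟩)
                ∨ b = some (fsucc n (by omega) ⟨c.val - 1, hp⟩,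
                    fsucc n (by omega) ⟨2*n - 1 - c.val, hq⟩)
                ∨ b = some (⟨2*n - 1 - c.val, hq⟩, ⟨2*n - 1 - c.val, hq⟩)
                ∨ b = some (⟨2*n - 1 - c.val, hq⟩, fsucc n (by omega) ⟨2*n - 1 - c.val, hq⟩)
                ∨ b = some (fsucc n (by omega) ⟨2*n - 1 - c.val, hq⟩,
                    fsucc n (by omega) ⟨2*n - 1 - c.val, hq⟩))))) := by
  have hn0 : 0 < n := by omega
  constructor
  · -- Part 1: at most one color
    intro b hb
    rw [Finset.card_le_one]
    intro c₁ h₁ c₂ h₂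
    simp only [Finset.mem_filter, Finset.mem_univ, true_and] at h₁ h₂
    have k₁ := key_fact (by omega) c₁.val (by omega) b hb h₁.1 h₁.2
    have k₂ := key_fact (by omega) c₂.val (by omega) b hb h₂.1 h₂.2
    apply Fin.ext
    rcases k₁ with ⟨e₁, l₁⟩ | ⟨e₁, u₁, v₁, hbe₁, hv₁⟩ <;>
      rcases k₂ with ⟨e₂, l₂⟩ | ⟨e₂, u₂, v₂, hbe₂, hv₂⟩
    · omega
    · exfalso
      rcases l₁ with h | h
      · rw [h] at hbe₂; exact absurd hbe₂ (by simp)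
      · rw [h] at hbe₂
        injection hbe₂ with h''
        have := congrArg (fun p => (Prod.snd p).val) h''
        simp only [Fin.val_mk] at this
        have hc2 := c₂.isLt
        omega
    · exfalso
      rcases l₂ with h | h
      · rw [h] at hbe₁; exact absurd hbe₁ (by simp)
      · rw [h] at hbe₁
        injection hbe₁ with h''
        have := congrArg (fun p => (Prod.snd p).val) h''
        simp only [Fin.val_mk] at this
        have hc1 := c₁.isLt
        omega
    · rw [hbe₁] at hbe₂
      injection hbe₂ with h''
      have := congrArg (fun p => (Prod.snd p).val) h''
      simp only at this
      have hc1 := c₁.isLt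
      have hc2 := c₂.isLt
      omega
  · -- Part 2: classification of long strings
    intro c b hb
    have hcn : c.val ≤ n := by have := c.isLt; omega
    rcases Nat.eq_zero_or_pos c.val with hc0 | hc1
    · constructor
      · intro h2
        rw [hc0] at h2
        exact Or.inl ⟨hc0, (class_zero hn0 b).mp h2⟩
      · rintro (⟨-, hlist⟩ | ⟨hpos, -⟩)
        · rw [hc0]
          exact (class_zero hn0 b).mpr hlist
        · omega
    · constructor
      · intro h2
        exact Or.inr ⟨hc1, by omega, by omega,
          (class_pos hn0 hc1 hcn b hb (by omega) (by omega)).mp h2⟩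
      · rintro (⟨hc0', -⟩ | ⟨-, hp', hq', h⟩)
        · omega
        · exact (class_pos hn0 hc1 hcn b hb hp' hq').mpr h
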